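/- Let M be a finitely generated ℤ[t]-module of exponent 2ⁿ which has length one. Then the dual module M^∧ = Hom_{ℤ[t]}(M, ℚ[t]/ℤ[t]) has exponent 2ⁿ and has length one. -/

import Mathlib

noncomputable instance : Algebra (Polynomial ℤ) (Polynomial ℚ) :=
  (Polynomial.mapRingHom (Int.castRingHom ℚ)).toAlgebra

/-- The `ℤ[t]`-module `ℚ[t]/ℤ[t]`: the quotient of `ℚ[t]` by its `ℤ[t]`-submodule `ℤ[t]`. -/
noncomputable abbrev QtZt : Type :=
  Polynomial ℚ ⧸ LinearMap.range (Algebra.linearMap (Polynomial ℤ) (Polynomial ℚ))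

/-- An `R`-module `M` has *length one* if there is a short exact sequence
`0 → F₁ → F₀ → M → 0` with `F₀`, `F₁` finitely generated free `R`-modules. -/
def IsLengthOne (R M : Type*) [CommRing R] [AddCommGroup M] [Module R M] : Prop :=
  ∃ (k l : ℕ) (f : (Fin k → R) →ₗ[R] (Fin l → R)) (g : (Fin l → R) →ₗ[R] M),
    Function.Injective f ∧ Function.Surjective g ∧ LinearMap.range f = LinearMap.ker g

namespace DualAux

open Polynomial Matrix

local notation "R" => Polynomial ℤ
local notation "S" => Polynomial ℚ
local notation "σ" => algebraMap (Polynomial ℤ) (Polynomial ℚ)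

lemma sigma_def : (σ : R →+* S) = mapRingHom (Int.castRingHom ℚ) := rfl

lemma sigma_inj : Function.Injective (σ : R →+* S) := by
  rw [sigma_def]
  simpa using Polynomial.map_injective (Int.castRingHom ℚ) Int.cast_injective

lemma exists_denom (p : S) : ∃ c : ℤ, c ≠ 0 ∧ ∃ q : R, σ q = c • p := by
  induction p using Polynomial.induction_on' with
  | add p r hp hr =>
    obtain ⟨c1, hc1, q1, hq1⟩ := hp
    obtain ⟨c2, hc2, q2, hq2⟩ := hr
    refine ⟨c1 * c2, mul_ne_zero hc1 hc2, c2 • q1 + c1 • q2, ?_⟩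
    rw [map_add, map_zsmul, map_zsmul, hq1, hq2, smul_add, smul_smul, smul_smul,
      mul_comm c2 c1]
  | monomial m a =>
    refine ⟨a.den, by exact_mod_cast a.pos.ne', monomial m a.num, ?_⟩
    rw [sigma_def]
    rw [coe_mapRingHom, Polynomial.map_monomial, Polynomial.smul_monomial]
    congr 1
    rw [zsmul_eq_mul, eq_intCast,
      show ((a.den : ℤ) : ℚ) * a = (a.num : ℚ) by
        push_cast
        rw [mul_comm, ← eq_div_iff (by exact_mod_cast a.pos.ne' : ((a.den:ℚ)) ≠ 0)]
        exact (Rat.num_div_den a).symm]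

lemma exists_denom_vec {m : ℕ} (v : Fin m → S) :
    ∃ c : ℤ, c ≠ 0 ∧ ∃ u : Fin m → R, ∀ i, σ (u i) = c • v i := by
  choose c hc u hu using fun i => exists_denom (v i)
  refine ⟨∏ i, c i, Finset.prod_ne_zero_iff.2 fun i _ => hc i,
    fun i => (∏ j ∈ Finset.univ.erase i, c j) • u i, fun i => ?_⟩
  rw [map_zsmul, hu i, smul_smul, Finset.prod_erase_mul _ _ (Finset.mem_univ i)]

lemma mapvec {a b : ℕ} (X : Matrix (Fin a) (Fin b) R) (y : Fin b → R) :
    (σ : R →+* S) ∘ (X *ᵥ y) = (X.map σ) *ᵥ ((σ : R →+* S) ∘ y) :=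
  funext fun i => RingHom.map_mulVec σ X y i

lemma mapdot {a : ℕ} (x y : Fin a → R) :
    σ (x ⬝ᵥ y) = ((σ : R →+* S) ∘ x) ⬝ᵥ ((σ : R →+* S) ∘ y) :=
  RingHom.map_dotProduct σ x y

lemma single_map {a : ℕ} (i : Fin a) :
    (σ : R →+* S) ∘ (Pi.single i 1 : Fin a → R) = Pi.single i 1 := by
  funext j
  rcases eq_or_ne j i with rfl | h
  · simp
  · simp [Function.comp, Pi.single_apply, h]

end DualAux

open DualAux Polynomial Matrix

local notation "R" => Polynomial ℤ
local notation "S" => Polynomial ℚ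
local notation "σ" => algebraMap (Polynomial ℤ) (Polynomial ℚ)

/-- Let `M` be a finitely generated `ℤ[t]`-module of exponent `2ⁿ` which has length one.
Then the dual module `M^∧ = Hom_{ℤ[t]}(M, ℚ[t]/ℤ[t])` has exponent `2ⁿ` and has length one. -/
theorem dual_isLengthOne
    (M : Type) [AddCommGroup M] [Module (Polynomial ℤ) M]
    [Module.Finite (Polynomial ℤ) M]
    (n : ℕ) (hexp : ∀ x : M, (2 : Polynomial ℤ) ^ n • x = 0)
    (hM : IsLengthOne (Polynomial ℤ) M) :
    (∀ φ : M →ₗ[Polynomial ℤ] QtZt, (2 : Polynomial ℤ) ^ n • φ = 0) ∧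
      IsLengthOne (Polynomial ℤ) (M →ₗ[Polynomial ℤ] QtZt) := by
  constructor
  · intro φ
    apply LinearMap.ext
    intro m
    rw [LinearMap.smul_apply, ← _root_.map_smul, hexp, map_zero, LinearMap.zero_apply]
  obtain ⟨k, l, f, g0, hfinj, hg0, hrk⟩ := hM
  set A : Matrix (Fin l) (Fin k) R := LinearMap.toMatrix' f with hAdef
  have hfA : ∀ x, f x = A *ᵥ x := fun x => by
    conv_lhs => rw [← Matrix.toLin'_toMatrix' f]
    rw [Matrix.toLin'_apply]
  set Aq : Matrix (Fin l) (Fin k) S := A.map σ with hAqdef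
  -- surjectivity of Aq over ℚ[t]
  have hsingle : ∀ j, ∃ v, Aq *ᵥ v = Pi.single j 1 := by
    intro j
    have h1 : g0 ((2:R)^n • (Pi.single j 1 : Fin l → R)) = 0 := by rw [_root_.map_smul, hexp]
    have h2 : ((2:R)^n • (Pi.single j 1 : Fin l → R)) ∈ LinearMap.range f := by
      rw [hrk]; exact h1
    obtain ⟨y, hy⟩ := h2
    refine ⟨Polynomial.C ((2:ℚ)^n)⁻¹ • ((σ : R →+* S) ∘ y), ?_⟩
    rw [Matrix.mulVec_smul, ← mapvec, ← hfA, hy]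
    funext r
    rcases eq_or_ne r j with rfl | h
    · simp only [Pi.smul_apply, Function.comp_apply, Pi.single_eq_same, smul_eq_mul,
        _root_.map_mul, map_pow, _root_.map_one]
      rw [show σ 2 = Polynomial.C (2:ℚ) by rw [map_ofNat σ 2]; exact (map_ofNat Polynomial.C 2).symm, ← Polynomial.C_pow, mul_one,
        ← Polynomial.C_mul, inv_mul_cancel₀ (by positivity), Polynomial.C_1]
    · simp [Pi.single_apply, h]
  have hsurjq : Function.Surjective (Aq.mulVecLin) := by
    intro z
    have hz : z = ∑ j, z j • (Pi.single j 1 : Fin l → S) := by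
      funext r
      simp [Finset.sum_apply, Pi.single_apply]
    have : z ∈ LinearMap.range Aq.mulVecLin := by
      rw [hz]
      refine Submodule.sum_mem _ fun j _ => Submodule.smul_mem _ _ ?_
      obtain ⟨v, hv⟩ := hsingle j
      exact ⟨v, by rw [Matrix.mulVecLin_apply, hv]⟩
    exact this
  have hinjq0 : ∀ v, Aq *ᵥ v = 0 → v = 0 := by
    intro v hv
    obtain ⟨c, hc, u, hu⟩ := exists_denom_vec v
    have h1 : (σ : R →+* S) ∘ u = c • v := funext hu
    have h2 : (σ : R →+* S) ∘ (A *ᵥ u) = 0 := by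
      rw [mapvec, ← hAqdef, h1, Matrix.mulVec_smul, hv, smul_zero]
    have h3 : A *ᵥ u = 0 := by
      funext i
      apply sigma_inj
      simpa using congrFun h2 i
    have h4 : u = 0 := hfinj (show f u = f 0 by rw [hfA, h3, map_zero])
    funext i
    have h5 := hu i
    rw [h4] at h5
    simp only [Pi.zero_apply, map_zero] at h5
    have h6 := (smul_eq_zero.mp h5.symm).resolve_left (by exact_mod_cast hc)
    exact h6
  have hinjq : Function.Injective (Aq.mulVecLin) :=
    LinearMap.ker_eq_bot.mp (LinearMap.ker_eq_bot'.mpr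
      (fun v hv => hinjq0 v (by rwa [Matrix.mulVecLin_apply] at hv)))
  have hkl : k = l := by
    have e := LinearEquiv.ofBijective _ ⟨hinjq, hsurjq⟩
    have h := e.finrank_eq
    rwa [Module.finrank_fin_fun, Module.finrank_fin_fun] at h
  subst hkl
  obtain ⟨Bq, hAB⟩ : ∃ Bq : Matrix (Fin k) (Fin k) S, Aq * Bq = 1 :=
    Matrix.mulVec_surjective_iff_exists_right_inverse.mp
      (by intro z; obtain ⟨v, hv⟩ := hsurjq z; exact ⟨v, by rwa [Matrix.mulVecLin_apply] at hv⟩)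
  have hBA : Bq * Aq = 1 := mul_eq_one_comm.mp hAB
  have hATBT : Aqᵀ * Bqᵀ = 1 := by rw [← Matrix.transpose_mul, hBA, Matrix.transpose_one]
  have hBTAT : Bqᵀ * Aqᵀ = 1 := by rw [← Matrix.transpose_mul, hAB, Matrix.transpose_one]
  have hBT : ∀ x : Fin k → S, Bqᵀ *ᵥ (Aqᵀ *ᵥ x) = x := fun x => by
    rw [Matrix.mulVec_mulVec, hBTAT, Matrix.one_mulVec]
  have hAT : ∀ x : Fin k → S, Aqᵀ *ᵥ (Bqᵀ *ᵥ x) = x := fun x => by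
    rw [Matrix.mulVec_mulVec, hATBT, Matrix.one_mulVec]
  have hATmap : Aᵀ.map σ = Aqᵀ := Matrix.transpose_map
  -- injectivity of Aᵀ over ℤ[t]
  have hTinj : Function.Injective (Aᵀ.mulVecLin : (Fin k → R) →ₗ[R] (Fin k → R)) := by
    refine LinearMap.ker_eq_bot.mp (LinearMap.ker_eq_bot'.mpr fun y hy => ?_)
    rw [Matrix.mulVecLin_apply] at hy
    have h2 : Aqᵀ *ᵥ ((σ : R →+* S) ∘ y) = 0 := by
      rw [← hATmap, ← mapvec, hy]
      funext i; simp
    have h3 : (σ : R →+* S) ∘ y = 0 := by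
      have := hBT ((σ : R →+* S) ∘ y)
      rw [h2, Matrix.mulVec_zero] at this
      exact this.symm
    funext i
    apply sigma_inj
    simpa using congrFun h3 i
  -- the submodule ℤ[t] ⊆ ℚ[t] and quotient helpers
  set N : Submodule R S := LinearMap.range (Algebra.linearMap R S) with hNdef
  have hpi0 : ∀ r : R, N.mkQ (σ r) = 0 := fun r => by
    rw [Submodule.mkQ_apply, Submodule.Quotient.mk_eq_zero]
    exact ⟨r, rfl⟩
  have hpismul : ∀ (r : R) (s : S), N.mkQ (σ r * s) = r • N.mkQ s := fun r s => by
    rw [← Algebra.smul_def, _root_.map_smul]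
  -- the bilinear pairing
  have hcomp : ∀ (w x : Fin k → R) (r : R),
      (σ : R →+* S) ∘ (r • x) = σ r • ((σ : R →+* S) ∘ x) := fun w x r =>
    funext fun i => by
      simp only [Function.comp_apply, Pi.smul_apply, smul_eq_mul, _root_.map_mul]
  have hcompadd : ∀ (x x' : Fin k → R),
      (σ : R →+* S) ∘ (x + x') = (σ : R →+* S) ∘ x + (σ : R →+* S) ∘ x' := fun x x' =>
    funext fun i => by simp
  let ψ : (Fin k → R) → ((Fin k → R) →ₗ[R] QtZt) := fun w =>
    { toFun := fun x => N.mkQ (((σ : R →+* S) ∘ x) ⬝ᵥ (Bqᵀ *ᵥ ((σ : R →+* S) ∘ w)))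
      map_add' := fun x x' => by
        rw [hcompadd, add_dotProduct, map_add]
      map_smul' := fun r x => by
        rw [hcomp w x r, smul_dotProduct, smul_eq_mul, hpismul, RingHom.id_apply] }
  have hψapply : ∀ w x, ψ w x = N.mkQ (((σ : R →+* S) ∘ x) ⬝ᵥ (Bqᵀ *ᵥ ((σ : R →+* S) ∘ w))) :=
    fun w x => rfl
  have hψker : ∀ w x, x ∈ LinearMap.ker g0 → ψ w x = 0 := by
    intro w x hx
    rw [← hrk] at hx
    obtain ⟨y, hy⟩ := hx
    rw [hψapply]
    have h1 : (σ : R →+* S) ∘ x = Aq *ᵥ ((σ : R →+* S) ∘ y) := by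
      rw [← hy, hfA, mapvec]
    rw [h1, dotProduct_comm, Matrix.dotProduct_mulVec, ← Matrix.mulVec_transpose,
      hAT, ← mapdot, hpi0]
  let e := g0.quotKerEquivOfSurjective hg0
  have hesymm : ∀ x, e.symm (g0 x) = Submodule.Quotient.mk x := fun x => by
    apply e.injective
    rw [e.apply_symm_apply]
    rfl
  have hle : ∀ w, LinearMap.ker g0 ≤ LinearMap.ker (ψ w) := fun w x hx => hψker w x hx
  let Gf : (Fin k → R) → (M →ₗ[R] QtZt) := fun w =>
    ((LinearMap.ker g0).liftQ (ψ w) (hle w)).comp e.symm.toLinearMap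
  have hGapply : ∀ w x, Gf w (g0 x) = ψ w x := fun w x => by
    show ((LinearMap.ker g0).liftQ (ψ w) (hle w)) (e.symm (g0 x)) = ψ w x
    rw [hesymm, Submodule.liftQ_apply]
  let G : (Fin k → R) →ₗ[R] (M →ₗ[R] QtZt) :=
    { toFun := Gf
      map_add' := fun w w' => by
        apply LinearMap.ext
        intro m
        obtain ⟨x, rfl⟩ := hg0 m
        rw [LinearMap.add_apply, hGapply, hGapply, hGapply, hψapply, hψapply, hψapply,
          hcompadd, Matrix.mulVec_add, dotProduct_add, map_add]
      map_smul' := fun r w => by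
        apply LinearMap.ext
        intro m
        obtain ⟨x, rfl⟩ := hg0 m
        rw [RingHom.id_apply, LinearMap.smul_apply, hGapply, hGapply, hψapply, hψapply,
          hcomp w w r, Matrix.mulVec_smul, dotProduct_smul, smul_eq_mul, hpismul] }
  have hGap : ∀ w x, G w (g0 x) = ψ w x := hGapply
  -- surjectivity of G
  have hGsurj : Function.Surjective G := by
    intro φ
    choose u hu using fun i : Fin k => N.mkQ_surjective (φ (g0 (Pi.single i 1)))
    have hmem : ∀ j, ∃ r : R, σ r = (Aqᵀ *ᵥ u) j := by
      intro j
      have hmk : N.mkQ ((Aqᵀ *ᵥ u) j) = 0 := by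
        have hexpand : (Aqᵀ *ᵥ u) j = ∑ i, σ (A i j) * u i := by
          simp [Matrix.mulVec, dotProduct, Matrix.transpose_apply, Matrix.map_apply,
            hAqdef]
        rw [hexpand, map_sum]
        have h1 : ∀ i ∈ Finset.univ, N.mkQ (σ (A i j) * u i) =
            A i j • φ (g0 (Pi.single i 1)) := fun i _ => by
          rw [hpismul, hu i]
        rw [Finset.sum_congr rfl h1]
        have h2 : ∑ i, A i j • φ (g0 (Pi.single i 1)) =
            φ (g0 (∑ i, A i j • (Pi.single i 1 : Fin k → R))) := by
          rw [map_sum, map_sum]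
          exact Finset.sum_congr rfl fun i _ => by rw [_root_.map_smul, _root_.map_smul]
        rw [h2]
        have h3 : (∑ i, A i j • (Pi.single i 1 : Fin k → R)) = f (Pi.single j 1) := by
          rw [hfA]
          funext r
          simp [Matrix.mulVec, dotProduct, Finset.sum_apply, Pi.single_apply]
        rw [h3]
        have h4 : g0 (f (Pi.single j 1)) = 0 := by
          have : f (Pi.single j 1) ∈ LinearMap.ker g0 := hrk ▸ LinearMap.mem_range_self f _
          exact this
        rw [h4, map_zero]
      rw [Submodule.mkQ_apply, Submodule.Quotient.mk_eq_zero] at hmk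
      obtain ⟨r, hr⟩ := hmk
      exact ⟨r, hr⟩
    choose w hw using hmem
    have hσw : (σ : R →+* S) ∘ w = Aqᵀ *ᵥ u := funext hw
    refine ⟨w, ?_⟩
    apply LinearMap.ext
    intro m
    obtain ⟨x, rfl⟩ := hg0 m
    rw [hGap, hψapply, hσw, hBT]
    have hstep : N.mkQ (((σ : R →+* S) ∘ x) ⬝ᵥ u) = ∑ i, x i • N.mkQ (u i) := by
      rw [show ((σ : R →+* S) ∘ x) ⬝ᵥ u = ∑ i, σ (x i) * u i from rfl, map_sum]
      exact Finset.sum_congr rfl fun i _ => hpismul (x i) (u i)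
    rw [hstep]
    have hx : x = ∑ i, x i • (Pi.single i 1 : Fin k → R) := by
      funext r
      simp [Finset.sum_apply, Pi.single_apply]
    conv_rhs => rw [hx]
    rw [map_sum, map_sum]
    exact Finset.sum_congr rfl fun i _ => by
      rw [_root_.map_smul, _root_.map_smul, hu i]
  -- kernel of G is the range of Aᵀ
  have hTrange : LinearMap.range (Aᵀ.mulVecLin : (Fin k → R) →ₗ[R] (Fin k → R)) =
      LinearMap.ker G := by
    ext w
    constructor
    · rintro ⟨y, rfl⟩
      rw [LinearMap.mem_ker]
      apply LinearMap.ext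
      intro m
      obtain ⟨x, rfl⟩ := hg0 m
      rw [LinearMap.zero_apply, Matrix.mulVecLin_apply, hGap, hψapply, mapvec, hATmap, hBT,
        ← mapdot, hpi0]
    · intro hwker
      rw [LinearMap.mem_ker] at hwker
      have h0 : ∀ i : Fin k, ∃ r : R, σ r = (Bqᵀ *ᵥ ((σ : R →+* S) ∘ w)) i := by
        intro i
        have h1 : G w (g0 (Pi.single i 1)) = 0 := by rw [hwker, LinearMap.zero_apply]
        rw [hGap, hψapply, single_map, single_dotProduct, one_mul,
          Submodule.mkQ_apply, Submodule.Quotient.mk_eq_zero] at h1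
        obtain ⟨r, hr⟩ := h1
        exact ⟨r, hr⟩
      choose y hy using h0
      refine ⟨y, ?_⟩
      have h2 : (σ : R →+* S) ∘ y = Bqᵀ *ᵥ ((σ : R →+* S) ∘ w) := funext hy
      have hσ : (σ : R →+* S) ∘ (Aᵀ *ᵥ y) = (σ : R →+* S) ∘ w := by
        rw [mapvec, hATmap, h2, hAT]
      rw [Matrix.mulVecLin_apply]
      funext i
      exact sigma_inj (congrFun hσ i)
  exact ⟨k, k, Aᵀ.mulVecLin, G, hTinj, hGsurj, hTrange⟩
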